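/- (Generalized Cassini determinant.) For every r ≥ 1 and every n ≥ 0, the determinant of the (r+2)×(r+2) integer matrix A_{r,n} with (i,j) entry F^{(r)}_{n+i+j} for 0 ≤ i, j ≤ r+1 equals (−1)^{n + ⌊(r+3)/2⌋}. -/

import Mathlib

/-- Hyperfibonacci numbers: `hfib 0 n = F_n`, `hfib (r+1) n = ∑_{k=0}^n hfib r k`. -/
def hfib : ℕ → ℕ → ℕ
  | 0, n => Nat.fib n
  | r + 1, n => ∑ k ∈ Finset.range (n + 1), hfib r k

/-- Fibonacci numbers extended to ℤ. -/
def fibz (k : ℤ) : ℤ :=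
  if 0 ≤ k then Nat.fib k.toNat else (-1) ^ ((-k).toNat + 1) * Nat.fib (-k).toNat

lemma fibz_natCast (a : ℕ) : fibz (a : ℤ) = Nat.fib a := by
  simp [fibz]

lemma fibz_neg_natCast (a : ℕ) : fibz (-(a : ℤ)) = (-1) ^ (a + 1) * Nat.fib a := by
  rcases Nat.eq_zero_or_pos a with h | h
  · subst h; simp [fibz]
  · rw [fibz, if_neg (by omega)]
    simp

lemma fibz_add_two (k : ℤ) : fibz (k + 2) = fibz (k + 1) + fibz k := by
  rcases le_or_gt 0 k with h | h
  · obtain ⟨a, rfl⟩ := Int.eq_ofNat_of_zero_le h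
    have h2 : (a : ℤ) + 2 = ((a + 2 : ℕ) : ℤ) := by push_cast; ring
    have h1 : (a : ℤ) + 1 = ((a + 1 : ℕ) : ℤ) := by push_cast; ring
    rw [h2, h1, fibz_natCast, fibz_natCast, fibz_natCast, Nat.fib_add_two]
    push_cast; ring
  · rcases eq_or_lt_of_le (by omega : k ≤ -1) with h1 | h1
    · subst h1; norm_num [fibz]
    rcases eq_or_lt_of_le (by omega : k ≤ -2) with h2 | h2
    · subst h2; norm_num [fibz]; rw [show ((2:ℤ).toNat) = 2 by rfl]; simp [Nat.fib]
    · obtain ⟨a, rfl⟩ : ∃ a : ℕ, k = -(a + 3 : ℕ) := ⟨(-k - 3).toNat, by omega⟩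
      have e2 : (-(a + 3 : ℕ) : ℤ) + 2 = -((a + 1 : ℕ) : ℤ) := by push_cast; ring
      have e1 : (-(a + 3 : ℕ) : ℤ) + 1 = -((a + 2 : ℕ) : ℤ) := by push_cast; ring
      rw [e2, e1, fibz_neg_natCast, fibz_neg_natCast, fibz_neg_natCast]
      have hf : (Nat.fib (a + 3) : ℤ) = Nat.fib (a + 1) + Nat.fib (a + 2) := by
        rw [show a + 3 = (a + 1) + 2 by ring, Nat.fib_add_two]; push_cast; ring
      rw [hf]
      push_cast [pow_add, pow_succ]
      ring

/-- Hyperfibonacci numbers extended to negative levels. -/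
def gz (s : ℤ) (m : ℕ) : ℤ :=
  if 0 ≤ s then (hfib s.toNat m : ℤ) else fibz (m + 2 * s)

lemma gz_natCast (t : ℕ) (m : ℕ) : gz (t : ℤ) m = hfib t m := by
  simp [gz]

lemma gz_nonpos {s : ℤ} (hs : s ≤ 0) (m : ℕ) : gz s m = fibz (m + 2 * s) := by
  rcases eq_or_lt_of_le hs with h | h
  · subst h; rw [gz, if_pos le_rfl]
    simp [hfib, fibz_natCast]
  · rw [gz, if_neg (by omega)]

lemma gz_rec (s : ℤ) (m : ℕ) : gz s (m + 1) = gz s m + gz (s - 1) (m + 1) := by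
  rcases lt_trichotomy s 0 with h | h | h
  · rw [gz_nonpos (by omega), gz_nonpos (by omega), gz_nonpos (by omega)]
    rw [show ((m + 1 : ℕ) : ℤ) + 2 * s = ((m : ℤ) + 2 * s - 1) + 2 by push_cast; ring,
      fibz_add_two]
    congr 2
    · ring
    · push_cast
      ring
  · subst h
    rw [gz_nonpos le_rfl, gz_nonpos le_rfl, gz_nonpos (by omega)]
    rcases Nat.eq_zero_or_pos m with rfl | hm
    · norm_num
      have h := fibz_add_two (-1)
      norm_num at h
      have h1 : fibz ((1:ℕ) : ℤ) = fibz 1 := by norm_num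
      have h0 : fibz ((0:ℕ) : ℤ) = fibz 0 := by norm_num
      rw [h1, h0] at *
      linarith [h]
    · obtain ⟨m', rfl⟩ := Nat.exists_eq_add_of_le hm
      rw [show ((1 + m' + 1 : ℕ) : ℤ) + 2 * 0 = (((m' + 2 : ℕ)) : ℤ) by push_cast; ring,
        show ((1 + m' : ℕ) : ℤ) + 2 * 0 = (((m' + 1 : ℕ)) : ℤ) by push_cast; ring,
        show ((1 + m' + 1 : ℕ) : ℤ) + 2 * (0 - 1) = (((m' : ℕ)) : ℤ) by push_cast; ring,
        fibz_natCast, fibz_natCast, fibz_natCast, Nat.fib_add_two]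
      push_cast; ring
  · obtain ⟨t, rfl⟩ := Int.eq_ofNat_of_zero_le (le_of_lt h)
    have ht : 1 ≤ t := by exact_mod_cast h
    obtain ⟨t', rfl⟩ : ∃ t'', t = t'' + 1 := ⟨t - 1, by omega⟩
    rw [show ((t' + 1 : ℕ) : ℤ) - 1 = ((t' : ℕ) : ℤ) by push_cast; ring,
      gz_natCast, gz_natCast, gz_natCast]
    show ((∑ k ∈ Finset.range (m + 1 + 1), hfib t' k : ℕ) : ℤ)
      = ((∑ k ∈ Finset.range (m + 1), hfib t' k : ℕ) : ℤ) + (hfib t' (m+1) : ℤ)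
    rw [Finset.sum_range_succ]
    push_cast
    ring

lemma cassz (n : ℕ) : fibz n * fibz ((n : ℤ) - 2) - fibz ((n : ℤ) - 1) ^ 2 = -(-1) ^ n := by
  induction n with
  | zero =>
    have h0 : fibz ((0:ℕ) : ℤ) = 0 := by rw [fibz_natCast]; simp
    have h1 := fibz_add_two (-2)
    have h2 := fibz_add_two (-3)
    rw [show (-2 : ℤ) + 2 = ((0:ℕ) : ℤ) by norm_num, show (-2:ℤ) + 1 = -1 by norm_num] at h1
    rw [show (-3 : ℤ) + 2 = -1 by norm_num, show (-3:ℤ) + 1 = -2 by norm_num] at h2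
    have hm1 : fibz (-1) = 1 := by
      have := fibz_add_two (-1)
      rw [show (-1 : ℤ) + 2 = ((1:ℕ):ℤ) by norm_num, show (-1:ℤ) + 1 = ((0:ℕ):ℤ) by norm_num,
        fibz_natCast, fibz_natCast] at this
      simp [Nat.fib] at this; omega
    rw [h0] at h1
    have h0' : fibz 0 = 0 := by simpa using h0
    push_cast
    norm_num [h0', hm1]
  | succ n ih =>
    have e1 : ((n + 1 : ℕ) : ℤ) = ((n : ℤ) - 1) + 2 := by push_cast; ring
    have e2 : ((n : ℕ) : ℤ) = ((n : ℤ) - 2) + 2 := by ring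
    have f1 : fibz ((n+1 : ℕ) : ℤ) = fibz n + fibz ((n:ℤ) - 1) := by
      rw [e1, fibz_add_two]; norm_num
    have f2 : fibz ((n : ℕ) : ℤ) = fibz ((n:ℤ) - 1) + fibz ((n:ℤ) - 2) := by
      nth_rewrite 1 [e2]
      rw [fibz_add_two, show (n:ℤ) - 2 + 1 = (n:ℤ) - 1 by ring]
    have g1 : ((n + 1 : ℕ) : ℤ) - 2 = (n : ℤ) - 1 := by push_cast; ring
    have g2 : ((n + 1 : ℕ) : ℤ) - 1 = (n : ℤ) := by push_cast; ring
    rw [g1, g2, f1]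
    linear_combination (-1 : ℤ) * ih + (-(fibz ((n:ℕ) : ℤ))) * f2

lemma gz_shift (j : ℕ) (s : ℤ) (m : ℕ) :
    gz s (m + j) = ∑ k ∈ Finset.range (j + 1), (j.choose k : ℤ) * gz (s - k) (m + k) := by
  induction j generalizing s m with
  | zero => simp
  | succ j ih =>
    set X : ℕ → ℤ := fun k => gz (s - k) (m + k) with hX
    have e3 : ∀ k : ℕ, gz ((s - 1) - k) ((m + 1) + k) = X (k + 1) := by
      intro k
      show _ = gz (s - ((k+1 : ℕ) : ℤ)) (m + (k+1))
      congr 1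
      · push_cast; ring
      · omega
    have h1 : gz s (m + (j + 1)) = gz s (m + j) + gz (s - 1) ((m + 1) + j) := by
      rw [show (m + 1) + j = (m + j) + 1 by ring, show m + (j+1) = (m+j)+1 by ring]
      exact gz_rec s (m + j)
    have hA : gz s (m + j) = ∑ k ∈ Finset.range (j + 1), (j.choose k : ℤ) * X k := ih s m
    have hB : gz (s - 1) ((m + 1) + j)
        = ∑ k ∈ Finset.range (j + 1), (j.choose k : ℤ) * X (k + 1) := by
      rw [ih (s - 1) (m + 1)]
      exact Finset.sum_congr rfl fun k _ => by rw [e3]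
    have hR : ∑ k ∈ Finset.range (j + 1 + 1), ((j+1).choose k : ℤ) * X k
        = ∑ i ∈ Finset.range (j + 1), ((j+1).choose (i+1) : ℤ) * X (i + 1)
          + ((j+1).choose 0 : ℤ) * X 0 :=
      Finset.sum_range_succ' (fun k => ((j+1).choose k : ℤ) * X k) (j+1)
    have hP : ∑ i ∈ Finset.range (j + 1), ((j+1).choose (i+1) : ℤ) * X (i + 1)
        = ∑ i ∈ Finset.range (j + 1), (j.choose i : ℤ) * X (i + 1)
          + ∑ i ∈ Finset.range (j + 1), (j.choose (i+1) : ℤ) * X (i + 1) := by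
      rw [← Finset.sum_add_distrib]
      apply Finset.sum_congr rfl
      intro i _
      rw [Nat.choose_succ_succ']
      push_cast; ring
    have hQ : ∑ i ∈ Finset.range (j + 1), (j.choose (i+1) : ℤ) * X (i + 1)
        = ∑ k ∈ Finset.range (j + 1), (j.choose k : ℤ) * X k - (j.choose 0 : ℤ) * X 0 := by
      rw [Finset.sum_range_succ' (fun k => (j.choose k : ℤ) * X k) j]
      rw [Finset.sum_range_succ]
      simp [Nat.choose_succ_self]
    rw [h1, hA, hB, hR, hP, hQ]
    simp
    ring

open Matrix in
lemma det_antitriangular (m : ℕ) (g : ℕ → ℤ) (hg : ∀ d, m ≤ d → g d = 0) :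
    (Matrix.of fun i j : Fin m => g (i + j)).det
      = (-1) ^ (m.choose 2) * g (m - 1) ^ m := by
  induction m generalizing g with
  | zero => simp [Matrix.det_fin_zero]
  | succ m ih =>
    rw [Matrix.det_succ_row _ (Fin.last m)]
    rw [Fintype.sum_eq_single (0 : Fin (m+1))]
    · have hlast : ((Fin.last m : Fin (m+1)) : ℕ) = m := rfl
      have h0 : ((0 : Fin (m+1)) : ℕ) = 0 := rfl
      have hsub : ((Matrix.of fun i j : Fin (m+1) => g (i + j)).submatrix
          (Fin.last m).succAbove (0 : Fin (m+1)).succAbove)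
          = Matrix.of fun i j : Fin m => (fun d => g (d + 1)) (i + j) := by
        ext i j
        simp only [Matrix.submatrix_apply, Fin.succAbove_last, Fin.zero_succAbove,
          Matrix.of_apply, Fin.coe_castSucc, Fin.val_succ]
        congr 1
      rw [hsub, ih (fun d => g (d + 1)) (fun d hd => hg (d+1) (by omega))]
      have hentry : (Matrix.of fun i j : Fin (m+1) => g (i + j)) (Fin.last m) 0 = g m := by
        simp [hlast, h0]
      rw [hentry, hlast, h0]
      have hch : (m+1).choose 2 = m.choose 1 + m.choose 2 := Nat.choose_succ_succ m 1
      rw [hch]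
      rcases Nat.eq_zero_or_pos m with rfl | hm
      · norm_num
      · rw [show m - 1 + 1 = m by omega, show m + 1 - 1 = m by omega]
        rw [pow_add, pow_add, Nat.choose_one_right, pow_succ]
        ring
    · intro j hj
      have hz : (Matrix.of fun i j : Fin (m+1) => g (i + j)) (Fin.last m) j = 0 := by
        show g _ = 0
        apply hg
        have hj' : (j : ℕ) ≠ 0 := fun h => hj (Fin.ext (by simp [h]))
        have : ((Fin.last m : Fin (m+1)) : ℕ) = m := rfl
        omega
      rw [hz]
      ring

/-- The antidiagonal sequence of the extended hyperfibonacci array. -/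
def bseq (r n d : ℕ) : ℤ := gz ((r : ℤ) - (d : ℤ)) (n + d)

def eseq (r n d : ℕ) : ℤ := bseq r n d - bseq r n (d+1) - bseq r n (d+2)

def fseq (r n d : ℕ) : ℤ := eseq r n d - eseq r n (d+1) - eseq r n (d+2)

lemma bseq_fib (r n d : ℕ) (h : r ≤ d) : bseq r n d = fibz ((n : ℤ) + 2*r - d) := by
  rw [bseq, gz_nonpos (by omega)]
  congr 1
  push_cast; ring

lemma eseq_vanish (r n d : ℕ) (h : r ≤ d) : eseq r n d = 0 := by
  rw [eseq, bseq_fib r n d h, bseq_fib r n (d+1) (by omega), bseq_fib r n (d+2) (by omega)]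
  have := fibz_add_two ((n : ℤ) + 2*r - d - 2)
  rw [show (n : ℤ) + 2*r - d - 2 + 2 = (n:ℤ) + 2*r - d by ring,
    show (n : ℤ) + 2*r - d - 2 + 1 = (n:ℤ) + 2*r - d - 1 by ring] at this
  rw [show ((n : ℤ) + 2*r - (d+1:ℕ)) = (n:ℤ) + 2*r - d - 1 by push_cast; ring,
    show ((n : ℤ) + 2*r - (d+2:ℕ)) = (n:ℤ) + 2*r - d - 2 by push_cast; ring]
  linarith [this]

lemma fseq_vanish (r n : ℕ) : ∀ d, r ≤ d → fseq r n d = 0 := by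
  intro d h
  rw [fseq, eseq_vanish r n d h, eseq_vanish r n (d+1) (by omega),
    eseq_vanish r n (d+2) (by omega)]
  ring

lemma hfib_one (m : ℕ) : (hfib 1 m : ℤ) = Nat.fib (m + 2) - 1 := by
  induction m with
  | zero => simp [hfib, Nat.fib]
  | succ m ih =>
    show ((∑ k ∈ Finset.range (m + 1 + 1), hfib 0 k : ℕ) : ℤ) = _
    rw [Finset.sum_range_succ, Nat.cast_add]
    have h1 : ((∑ k ∈ Finset.range (m + 1), hfib 0 k : ℕ) : ℤ) = Nat.fib (m+2) - 1 := ih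
    rw [h1, Nat.fib_add_two (n := m+1)]
    have h2 : hfib 0 (m+1) = Nat.fib (m+1) := rfl
    rw [h2]
    push_cast
    ring

lemma fseq_top (r n : ℕ) (hr : 1 ≤ r) : fseq r n (r - 1) = -1 := by
  rw [fseq, show r - 1 + 1 = r by omega, show r - 1 + 2 = r + 1 by omega,
    eseq_vanish r n r le_rfl, eseq_vanish r n (r+1) (by omega)]
  rw [eseq, show r - 1 + 1 = r by omega, show r - 1 + 2 = r + 1 by omega]
  have hb1 : bseq r n (r - 1) = (hfib 1 (n + (r-1)) : ℤ) := by
    rw [bseq, show (r : ℤ) - ((r - 1 : ℕ) : ℤ) = ((1:ℕ) : ℤ) by push_cast [Nat.cast_sub hr]; ring,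
      gz_natCast]
  have hb2 : bseq r n r = (Nat.fib (n + r) : ℤ) := by
    rw [bseq, show (r : ℤ) - (r : ℤ) = ((0:ℕ) : ℤ) by push_cast; ring, gz_natCast]
    rfl
  have hb3 : bseq r n (r + 1) = (Nat.fib (n + (r-1)) : ℤ) := by
    rw [bseq, gz_nonpos (by push_cast; omega)]
    rw [show ((n + (r+1) : ℕ) : ℤ) + 2 * ((r:ℤ) - ((r+1 : ℕ) : ℤ)) = ((n + (r-1) : ℕ) : ℤ) by
      push_cast [Nat.cast_sub hr]; ring]
    rw [fibz_natCast]
  rw [hb1, hb2, hb3, hfib_one]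
  have harg : n + (r - 1) + 2 = (n + (r-1)) + 2 := rfl
  rw [Nat.fib_add_two (n := n + (r-1))]
  have : n + r = n + (r - 1) + 1 := by omega
  rw [this]
  push_cast
  ring

lemma detD_cassini (r n : ℕ) :
    bseq r n (2*r) * bseq r n (2*r + 2) - bseq r n (2*r + 1) ^ 2 = -(-1)^n := by
  rw [bseq_fib r n (2*r) (by omega), bseq_fib r n (2*r+1) (by omega),
    bseq_fib r n (2*r+2) (by omega)]
  rw [show ((n : ℤ) + 2*r - (2*r : ℕ)) = (n : ℤ) by push_cast; ring,
    show ((n : ℤ) + 2*r - (2*r + 1 : ℕ)) = (n : ℤ) - 1 by push_cast; ring,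
    show ((n : ℤ) + 2*r - (2*r + 2 : ℕ)) = (n : ℤ) - 2 by push_cast; ring]
  exact cassz n

lemma neg_one_pow_congr_nat {a b : ℕ} (h : a % 2 = b % 2) : ((-1:ℤ))^a = (-1)^b := by
  conv_lhs => rw [← Nat.div_add_mod a 2]
  conv_rhs => rw [← Nat.div_add_mod b 2]
  rw [pow_add, pow_add, pow_mul, pow_mul]
  norm_num [h]

lemma signs (r : ℕ) : ((-1:ℤ)) ^ (r.choose 2 + r + 1) = (-1) ^ ((r+3)/2) := by
  induction r using Nat.twoStepInduction with
  | zero => norm_num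
  | one => norm_num [Nat.choose]
  | more r ih _ =>
    have hc : (r+2).choose 2 = r.choose 2 + (2*r+1) := by
      rw [Nat.choose_succ_succ (r+1) 1, Nat.choose_succ_succ r 1,
        Nat.choose_one_right, Nat.choose_one_right]
      generalize r.choose 2 = c
      omega
    rw [hc]
    have h2 : (-1:ℤ)^(r.choose 2 + (2*r+1) + (r+2) + 1)
        = (-1)^(r.choose 2 + r + 1) * (-1)^(2*r+3) := by
      rw [← pow_add]
      apply neg_one_pow_congr_nat
      generalize r.choose 2 = c
      omega
    rw [h2, ih]
    have h3 : ((-1:ℤ))^(2*r+3) = -1 := by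
      rw [show ((-1:ℤ))^(2*r+3) = (-1)^(1:ℕ) from neg_one_pow_congr_nat (by omega)]
      norm_num
    rw [h3]
    have h4 : (r+2+3)/2 = (r+3)/2 + 1 := by omega
    rw [h4, pow_succ]

lemma hfib_expand (r n i0 j0 : ℕ) (hi : i0 < r + 2) (hj : j0 < r + 2) :
    (hfib r (n + i0 + j0) : ℤ)
      = ∑ l ∈ Finset.range (r+2), (∑ k ∈ Finset.range (r+2),
          ((i0.choose k : ℤ)) * bseq r n (k + l)) * ((j0.choose l : ℕ) : ℤ) := by
  have h0 : (hfib r (n + i0 + j0) : ℤ) = gz r ((n + j0) + i0) := by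
    rw [show (n + j0) + i0 = n + i0 + j0 by ring, gz_natCast]
  rw [h0, gz_shift i0 (r:ℤ) (n + j0)]
  have h2 : ∀ a ∈ Finset.range (i0+1),
      (i0.choose a : ℤ) * gz ((r:ℤ) - a) ((n + j0) + a)
      = ∑ c ∈ Finset.range (j0+1), (i0.choose a : ℤ) * ((j0.choose c : ℤ) * bseq r n (a + c)) := by
    intro a _
    rw [show (n + j0) + a = (n + a) + j0 by ring, gz_shift j0 ((r:ℤ) - a) (n + a),
      Finset.mul_sum]
    apply Finset.sum_congr rfl
    intro c _
    have hbc : gz ((r:ℤ) - a - c) ((n + a) + c) = bseq r n (a + c) := by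
      rw [bseq]
      congr 1
      · push_cast; ring
      · omega
    rw [hbc]
  rw [Finset.sum_congr rfl h2]
  have h3 : ∀ a ∈ Finset.range (i0+1),
      (∑ c ∈ Finset.range (j0+1), (i0.choose a : ℤ) * ((j0.choose c : ℤ) * bseq r n (a + c)))
      = ∑ c ∈ Finset.range (r+2), (i0.choose a : ℤ) * ((j0.choose c : ℤ) * bseq r n (a + c)) := by
    intro a _
    apply Finset.sum_subset (Finset.range_subset_range.2 (by omega))
    intro c _ hc
    have hcc : j0 < c := by
      simp only [Finset.mem_range] at hc
      omega
    simp [Nat.choose_eq_zero_of_lt hcc]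
  rw [Finset.sum_congr rfl h3]
  have h4 : (∑ a ∈ Finset.range (i0+1), ∑ c ∈ Finset.range (r+2),
        (i0.choose a : ℤ) * ((j0.choose c : ℤ) * bseq r n (a + c)))
      = ∑ a ∈ Finset.range (r+2), ∑ c ∈ Finset.range (r+2),
        (i0.choose a : ℤ) * ((j0.choose c : ℤ) * bseq r n (a + c)) := by
    apply Finset.sum_subset (Finset.range_subset_range.2 (by omega))
    intro a _ ha
    have haa : i0 < a := by
      simp only [Finset.mem_range] at ha
      omega
    apply Finset.sum_eq_zero
    intro c _
    simp [Nat.choose_eq_zero_of_lt haa]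
  rw [h4, Finset.sum_comm]
  apply Finset.sum_congr rfl
  intro l _
  rw [Finset.sum_mul]
  apply Finset.sum_congr rfl
  intro k _
  ring

open Matrix in
/-- generalized Cassini determinant:
`det A_{r,n} = (-1)^{n + ⌊(r+3)/2⌋}` where `A_{r,n}` is the `(r+2)×(r+2)`
Hankel matrix with `(i,j)` entry `F^{(r)}_{n+i+j}`. -/
theorem stmt_15 (r : ℕ) (hr : 1 ≤ r) (n : ℕ) :
    (Matrix.of fun i j : Fin (r + 2) => (hfib r (n + i + j) : ℤ)).det =
      (-1) ^ (n + (r + 3) / 2) := by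
  classical
  set P : Matrix (Fin (r+2)) (Fin (r+2)) ℤ :=
    Matrix.of (fun i l : Fin (r+2) => (((i:ℕ)).choose (l:ℕ) : ℤ)) with hPdef
  set B : Matrix (Fin (r+2)) (Fin (r+2)) ℤ :=
    Matrix.of (fun i j : Fin (r+2) => bseq r n ((i:ℕ) + (j:ℕ))) with hBdef
  set R : Matrix (Fin (r+2)) (Fin (r+2)) ℤ :=
    Matrix.of (fun k j : Fin (r+2) =>
      if k = j then (1:ℤ) else
        if (j:ℕ) < r ∧ ((k:ℕ) = (j:ℕ)+1 ∨ (k:ℕ) = (j:ℕ)+2) then -1 else 0) with hRdef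
  -- Step 1 : Pascal factorization
  have hfact : (Matrix.of fun i j : Fin (r + 2) => (hfib r (n + i + j) : ℤ)) = P * B * Pᵀ := by
    ext i j
    rw [Matrix.of_apply, Matrix.mul_apply]
    have hterm : ∀ l : Fin (r+2), (P * B) i l * Pᵀ l j
        = (fun l0 : ℕ => (∑ k ∈ Finset.range (r+2),
            (((i:ℕ).choose k : ℕ) : ℤ) * bseq r n (k + l0)) * (((j:ℕ).choose l0 : ℕ) : ℤ)) (l:ℕ) := by
      intro l
      rw [Matrix.transpose_apply, Matrix.mul_apply]
      simp only [hPdef, hBdef, Matrix.of_apply]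
      congr 1
      rw [← Fin.sum_univ_eq_sum_range
        (fun k => (((i:ℕ).choose k : ℕ) : ℤ) * bseq r n (k + (l:ℕ))) (r+2)]
    rw [Finset.sum_congr rfl (fun l _ => hterm l)]
    rw [Fin.sum_univ_eq_sum_range
      (fun l0 => (∑ k ∈ Finset.range (r+2),
        (((i:ℕ).choose k : ℕ) : ℤ) * bseq r n (k + l0)) * (((j:ℕ).choose l0 : ℕ) : ℤ)) (r+2)]
    exact hfib_expand r n (i:ℕ) (j:ℕ) i.isLt j.isLt
  have detP : P.det = 1 := by
    have ht : P.BlockTriangular OrderDual.toDual := by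
      intro a c h
      have hac : (a:ℕ) < (c:ℕ) := h
      simp only [hPdef, Matrix.of_apply]
      rw [Nat.choose_eq_zero_of_lt hac]
      norm_num
    rw [Matrix.det_of_lowerTriangular P ht]
    apply Finset.prod_eq_one
    intro a _
    simp [hPdef, Nat.choose_self]
  have detR : R.det = 1 := by
    have ht : R.BlockTriangular OrderDual.toDual := by
      intro a c h
      have hac : (a:ℕ) < (c:ℕ) := h
      simp only [hRdef, Matrix.of_apply]
      rw [if_neg (by intro e; rw [e] at hac; omega), if_neg (by omega)]
    rw [Matrix.det_of_lowerTriangular R ht]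
    apply Finset.prod_eq_one
    intro a _
    simp [hRdef]
  -- Step 2 : difference operators
  have hBR : ∀ i j : Fin (r+2), (B * R) i j
      = if (j:ℕ) < r then eseq r n ((i:ℕ)+(j:ℕ)) else bseq r n ((i:ℕ)+(j:ℕ)) := by
    intro i j
    rw [Matrix.mul_apply]
    by_cases h : (j:ℕ) < r
    · rw [if_pos h]
      have hj1 : (j:ℕ)+1 < r + 2 := by omega
      have hj2 : (j:ℕ)+2 < r + 2 := by omega
      have split : ∀ k : Fin (r+2), B i k * R k j
          = (if k = j then bseq r n ((i:ℕ)+(j:ℕ)) else 0)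
            + ((if k = (⟨(j:ℕ)+1, hj1⟩ : Fin (r+2)) then -bseq r n ((i:ℕ)+((j:ℕ)+1)) else 0)
            + (if k = (⟨(j:ℕ)+2, hj2⟩ : Fin (r+2)) then -bseq r n ((i:ℕ)+((j:ℕ)+2)) else 0)) := by
        intro k
        simp only [hRdef, hBdef, Matrix.of_apply]
        by_cases e0 : k = j
        · subst e0
          have n1 : ¬(k = (⟨(k:ℕ)+1, hj1⟩ : Fin (r+2))) := by simp [Fin.ext_iff]
          have n2 : ¬(k = (⟨(k:ℕ)+2, hj2⟩ : Fin (r+2))) := by simp [Fin.ext_iff]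
          rw [if_pos (rfl : k = k), if_pos (rfl : k = k), if_neg n1, if_neg n2]
          ring
        · rw [if_neg e0, if_neg e0]
          by_cases e1 : k = (⟨(j:ℕ)+1, hj1⟩ : Fin (r+2))
          · subst e1
            have c1 : (j:ℕ) < r ∧ (((⟨(j:ℕ)+1, hj1⟩ : Fin (r+2)) : ℕ) = (j:ℕ)+1
                ∨ ((⟨(j:ℕ)+1, hj1⟩ : Fin (r+2)) : ℕ) = (j:ℕ)+2) := ⟨h, Or.inl rfl⟩
            have n2 : ¬((⟨(j:ℕ)+1, hj1⟩ : Fin (r+2)) = (⟨(j:ℕ)+2, hj2⟩ : Fin (r+2))) := by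
              simp [Fin.ext_iff]
            rw [if_pos c1,
              if_pos (rfl : (⟨(j:ℕ)+1, hj1⟩ : Fin (r+2)) = (⟨(j:ℕ)+1, hj1⟩ : Fin (r+2))),
              if_neg n2]
            ring
          · rw [if_neg e1]
            by_cases e2 : k = (⟨(j:ℕ)+2, hj2⟩ : Fin (r+2))
            · subst e2
              have c2 : (j:ℕ) < r ∧ (((⟨(j:ℕ)+2, hj2⟩ : Fin (r+2)) : ℕ) = (j:ℕ)+1
                  ∨ ((⟨(j:ℕ)+2, hj2⟩ : Fin (r+2)) : ℕ) = (j:ℕ)+2) := ⟨h, Or.inr rfl⟩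
              rw [if_pos c2,
                if_pos (rfl : (⟨(j:ℕ)+2, hj2⟩ : Fin (r+2)) = (⟨(j:ℕ)+2, hj2⟩ : Fin (r+2)))]
              ring
            · have nc : ¬((j:ℕ) < r ∧ ((k:ℕ) = (j:ℕ)+1 ∨ (k:ℕ) = (j:ℕ)+2)) := by
                rintro ⟨-, h1 | h2⟩
                · exact e1 (Fin.ext h1)
                · exact e2 (Fin.ext h2)
              rw [if_neg e2, if_neg nc]
              ring
      rw [Finset.sum_congr rfl (fun k _ => split k)]
      rw [Finset.sum_add_distrib, Finset.sum_add_distrib,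
        Finset.sum_ite_eq' Finset.univ j (fun _ => bseq r n ((i:ℕ)+(j:ℕ))),
        Finset.sum_ite_eq' Finset.univ (⟨(j:ℕ)+1, hj1⟩ : Fin (r+2))
          (fun _ => -bseq r n ((i:ℕ)+((j:ℕ)+1))),
        Finset.sum_ite_eq' Finset.univ (⟨(j:ℕ)+2, hj2⟩ : Fin (r+2))
          (fun _ => -bseq r n ((i:ℕ)+((j:ℕ)+2)))]
      simp only [Finset.mem_univ, if_true]
      rw [eseq, show (i:ℕ)+((j:ℕ)+1) = (i:ℕ)+(j:ℕ)+1 by omega,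
        show (i:ℕ)+((j:ℕ)+2) = (i:ℕ)+(j:ℕ)+2 by omega]
      ring
    · rw [if_neg h]
      have split : ∀ k : Fin (r+2), B i k * R k j
          = if k = j then bseq r n ((i:ℕ)+(j:ℕ)) else 0 := by
        intro k
        simp only [hRdef, hBdef, Matrix.of_apply]
        by_cases e0 : k = j
        · subst e0; rw [if_pos rfl, if_pos rfl]; ring
        · rw [if_neg e0, if_neg e0, if_neg (by rintro ⟨h1, -⟩; exact h h1)]
          ring
      rw [Finset.sum_congr rfl (fun k _ => split k),
        Finset.sum_ite_eq' Finset.univ j (fun _ => bseq r n ((i:ℕ)+(j:ℕ)))]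
      simp
  have hRt : ∀ (M : Matrix (Fin (r+2)) (Fin (r+2)) ℤ) (i j : Fin (r+2)),
      (Rᵀ * M) i j = if h : (i:ℕ) < r
        then M i j - M ⟨(i:ℕ)+1, by omega⟩ j - M ⟨(i:ℕ)+2, by omega⟩ j
        else M i j := by
    intro M i j
    rw [Matrix.mul_apply]
    simp only [Matrix.transpose_apply]
    by_cases h : (i:ℕ) < r
    · rw [dif_pos h]
      have hi1 : (i:ℕ)+1 < r + 2 := by omega
      have hi2 : (i:ℕ)+2 < r + 2 := by omega
      have split : ∀ k : Fin (r+2), R k i * M k j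
          = (if k = i then M i j else 0)
            + ((if k = (⟨(i:ℕ)+1, hi1⟩ : Fin (r+2)) then -(M ⟨(i:ℕ)+1, hi1⟩ j) else 0)
            + (if k = (⟨(i:ℕ)+2, hi2⟩ : Fin (r+2)) then -(M ⟨(i:ℕ)+2, hi2⟩ j) else 0)) := by
        intro k
        simp only [hRdef, Matrix.of_apply]
        by_cases e0 : k = i
        · subst e0
          have n1 : ¬(k = (⟨(k:ℕ)+1, hi1⟩ : Fin (r+2))) := by simp [Fin.ext_iff]
          have n2 : ¬(k = (⟨(k:ℕ)+2, hi2⟩ : Fin (r+2))) := by simp [Fin.ext_iff]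
          rw [if_pos (rfl : k = k), if_pos (rfl : k = k), if_neg n1, if_neg n2]
          ring
        · rw [if_neg e0, if_neg e0]
          by_cases e1 : k = (⟨(i:ℕ)+1, hi1⟩ : Fin (r+2))
          · subst e1
            have c1 : (i:ℕ) < r ∧ (((⟨(i:ℕ)+1, hi1⟩ : Fin (r+2)) : ℕ) = (i:ℕ)+1
                ∨ ((⟨(i:ℕ)+1, hi1⟩ : Fin (r+2)) : ℕ) = (i:ℕ)+2) := ⟨h, Or.inl rfl⟩
            have n2 : ¬((⟨(i:ℕ)+1, hi1⟩ : Fin (r+2)) = (⟨(i:ℕ)+2, hi2⟩ : Fin (r+2))) := by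
              simp [Fin.ext_iff]
            rw [if_pos c1,
              if_pos (rfl : (⟨(i:ℕ)+1, hi1⟩ : Fin (r+2)) = (⟨(i:ℕ)+1, hi1⟩ : Fin (r+2))),
              if_neg n2]
            ring
          · rw [if_neg e1]
            by_cases e2 : k = (⟨(i:ℕ)+2, hi2⟩ : Fin (r+2))
            · subst e2
              have c2 : (i:ℕ) < r ∧ (((⟨(i:ℕ)+2, hi2⟩ : Fin (r+2)) : ℕ) = (i:ℕ)+1
                  ∨ ((⟨(i:ℕ)+2, hi2⟩ : Fin (r+2)) : ℕ) = (i:ℕ)+2) := ⟨h, Or.inr rfl⟩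
              rw [if_pos c2,
                if_pos (rfl : (⟨(i:ℕ)+2, hi2⟩ : Fin (r+2)) = (⟨(i:ℕ)+2, hi2⟩ : Fin (r+2)))]
              ring
            · have nc : ¬((i:ℕ) < r ∧ ((k:ℕ) = (i:ℕ)+1 ∨ (k:ℕ) = (i:ℕ)+2)) := by
                rintro ⟨-, h1 | h2⟩
                · exact e1 (Fin.ext h1)
                · exact e2 (Fin.ext h2)
              rw [if_neg e2, if_neg nc]
              ring
      rw [Finset.sum_congr rfl (fun k _ => split k)]
      rw [Finset.sum_add_distrib, Finset.sum_add_distrib,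
        Finset.sum_ite_eq' Finset.univ i (fun _ => M i j),
        Finset.sum_ite_eq' Finset.univ (⟨(i:ℕ)+1, hi1⟩ : Fin (r+2))
          (fun _ => -(M ⟨(i:ℕ)+1, hi1⟩ j)),
        Finset.sum_ite_eq' Finset.univ (⟨(i:ℕ)+2, hi2⟩ : Fin (r+2))
          (fun _ => -(M ⟨(i:ℕ)+2, hi2⟩ j))]
      simp only [Finset.mem_univ, if_true]
      ring
    · rw [dif_neg h]
      have split : ∀ k : Fin (r+2), R k i * M k j
          = if k = i then M i j else 0 := by
        intro k
        simp only [hRdef, Matrix.of_apply]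
        by_cases e0 : k = i
        · subst e0; rw [if_pos rfl, if_pos rfl]; ring
        · rw [if_neg e0, if_neg e0, if_neg (by rintro ⟨h1, -⟩; exact h h1)]
          ring
      rw [Finset.sum_congr rfl (fun k _ => split k),
        Finset.sum_ite_eq' Finset.univ i (fun _ => M i j)]
      simp
  have hCentry : ∀ i j : Fin (r+2), (Rᵀ * (B * R)) i j
      = if (i:ℕ) < r ∧ (j:ℕ) < r then fseq r n ((i:ℕ)+(j:ℕ))
        else if r ≤ (i:ℕ) ∧ r ≤ (j:ℕ) then bseq r n ((i:ℕ)+(j:ℕ)) else 0 := by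
    intro i j
    rw [hRt (B * R) i j]
    by_cases hi : (i:ℕ) < r
    · rw [dif_pos hi]
      rw [hBR i j, hBR ⟨(i:ℕ)+1, by omega⟩ j, hBR ⟨(i:ℕ)+2, by omega⟩ j]
      by_cases hj : (j:ℕ) < r
      · rw [if_pos hj, if_pos hj, if_pos hj, if_pos ⟨hi, hj⟩]
        show eseq r n ((i:ℕ)+(j:ℕ)) - eseq r n ((i:ℕ)+1+(j:ℕ)) - eseq r n ((i:ℕ)+2+(j:ℕ))
          = fseq r n ((i:ℕ)+(j:ℕ))
        rw [fseq, show (i:ℕ)+1+(j:ℕ) = (i:ℕ)+(j:ℕ)+1 by omega,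
          show (i:ℕ)+2+(j:ℕ) = (i:ℕ)+(j:ℕ)+2 by omega]
      · rw [if_neg hj, if_neg hj, if_neg hj, if_neg (by omega), if_neg (by omega)]
        show bseq r n ((i:ℕ)+(j:ℕ)) - bseq r n ((i:ℕ)+1+(j:ℕ)) - bseq r n ((i:ℕ)+2+(j:ℕ)) = 0
        have hv := eseq_vanish r n ((i:ℕ)+(j:ℕ)) (by omega)
        rw [eseq] at hv
        rw [show (i:ℕ)+1+(j:ℕ) = (i:ℕ)+(j:ℕ)+1 by omega,
          show (i:ℕ)+2+(j:ℕ) = (i:ℕ)+(j:ℕ)+2 by omega]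
        linarith [hv]
    · rw [dif_neg hi, hBR i j]
      by_cases hj : (j:ℕ) < r
      · rw [if_pos hj, if_neg (by omega), if_neg (by omega)]
        exact eseq_vanish r n ((i:ℕ)+(j:ℕ)) (by omega)
      · rw [if_neg hj, if_neg (by omega), if_pos ⟨by omega, by omega⟩]
  set T : Matrix (Fin r) (Fin r) ℤ :=
    Matrix.of (fun i j : Fin r => fseq r n ((i:ℕ)+(j:ℕ))) with hTdef
  set D2 : Matrix (Fin 2) (Fin 2) ℤ :=
    Matrix.of (fun i j : Fin 2 => bseq r n ((r+(i:ℕ))+(r+(j:ℕ)))) with hDdef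
  have hblocks : Rᵀ * (B * R)
      = (Matrix.fromBlocks T 0 0 D2).submatrix finSumFinEquiv.symm finSumFinEquiv.symm := by
    ext i j
    obtain ⟨i', rfl⟩ : ∃ i', finSumFinEquiv i' = i :=
      ⟨finSumFinEquiv.symm i, Equiv.apply_symm_apply _ _⟩
    obtain ⟨j', rfl⟩ : ∃ j', finSumFinEquiv j' = j :=
      ⟨finSumFinEquiv.symm j, Equiv.apply_symm_apply _ _⟩
    rw [Matrix.submatrix_apply, Equiv.symm_apply_apply, Equiv.symm_apply_apply, hCentry]
    rcases i' with a | a <;> rcases j' with c | c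
    · simp only [finSumFinEquiv_apply_left, Fin.coe_castAdd, Matrix.fromBlocks_apply₁₁]
      exact if_pos (show (a:ℕ) < r ∧ (c:ℕ) < r from ⟨a.isLt, c.isLt⟩)
    · simp only [finSumFinEquiv_apply_left, finSumFinEquiv_apply_right, Fin.coe_castAdd,
        Fin.coe_natAdd, Matrix.fromBlocks_apply₁₂]
      exact (if_neg (show ¬((a:ℕ) < r ∧ r + (c:ℕ) < r) by omega)).trans
        (if_neg (show ¬(r ≤ (a:ℕ) ∧ r ≤ r + (c:ℕ)) by omega))
    · simp only [finSumFinEquiv_apply_left, finSumFinEquiv_apply_right, Fin.coe_castAdd,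
        Fin.coe_natAdd, Matrix.fromBlocks_apply₂₁]
      exact (if_neg (show ¬(r + (a:ℕ) < r ∧ (c:ℕ) < r) by omega)).trans
        (if_neg (show ¬(r ≤ r + (a:ℕ) ∧ r ≤ (c:ℕ)) by omega))
    · simp only [finSumFinEquiv_apply_right, Fin.coe_natAdd, Matrix.fromBlocks_apply₂₂]
      exact (if_neg (show ¬(r + (a:ℕ) < r ∧ r + (c:ℕ) < r) by omega)).trans
        (if_pos (show r ≤ r + (a:ℕ) ∧ r ≤ r + (c:ℕ) from ⟨by omega, by omega⟩))
  have detT : T.det = (-1)^(r.choose 2) * (-1:ℤ)^r := by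
    rw [hTdef, det_antitriangular r (fseq r n) (fseq_vanish r n), fseq_top r n hr]
  have detD2 : D2.det = -(-1:ℤ)^n := by
    rw [Matrix.det_fin_two]
    simp only [hDdef, Matrix.of_apply]
    show bseq r n ((r+0)+(r+0)) * bseq r n ((r+1)+(r+1))
        - bseq r n ((r+0)+(r+1)) * bseq r n ((r+1)+(r+0)) = -(-1:ℤ)^n
    rw [show (r+0)+(r+0) = 2*r by ring, show (r+1)+(r+1) = 2*r+2 by ring,
      show (r+0)+(r+1) = 2*r+1 by ring, show (r+1)+(r+0) = 2*r+1 by ring]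
    linear_combination detD_cassini r n
  calc (Matrix.of fun i j : Fin (r + 2) => (hfib r (n + i + j) : ℤ)).det
      = (P * B * Pᵀ).det := by rw [hfact]
    _ = B.det := by
        rw [Matrix.det_mul, Matrix.det_mul, Matrix.det_transpose, detP]
        ring
    _ = (Rᵀ * (B * R)).det := by
        rw [Matrix.det_mul, Matrix.det_mul, Matrix.det_transpose, detR]
        ring
    _ = (Matrix.fromBlocks T (0 : Matrix (Fin r) (Fin 2) ℤ)
          (0 : Matrix (Fin 2) (Fin r) ℤ) D2).det := by
        rw [hblocks, Matrix.det_submatrix_equiv_self]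
    _ = T.det * D2.det := Matrix.det_fromBlocks_zero₂₁ T 0 D2
    _ = ((-1)^(r.choose 2) * (-1:ℤ)^r) * (-(-1:ℤ)^n) := by rw [detT, detD2]
    _ = (-1) ^ (n + (r + 3) / 2) := by
        rw [show ((-1:ℤ)^(r.choose 2) * (-1:ℤ)^r) * (-(-1:ℤ)^n)
            = (-1:ℤ)^(r.choose 2 + r + 1) * (-1:ℤ)^n by
          rw [pow_add, pow_add, pow_one]; ring]
        rw [signs r, ← pow_add]
        apply neg_one_pow_congr_nat
        omega
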